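/- Under the ADMM setting (see context), assuming a saddle point of 𝓛 exists, both constraint violations of the iterates converge to zero: ‖Wᵏ X − Zᵏ‖_F → 0 and ‖W̃ᵏ − Wᵏ‖_F → 0 as k → ∞. -/

import Mathlib

open Matrix BigOperators Finset Filter

/-- Squared Frobenius norm. -/
noncomputable def frobSq {m n : ℕ} (A : Matrix (Fin m) (Fin n) ℝ) : ℝ :=
  ∑ i, ∑ j, (A i j) ^ 2

/-- Frobenius norm. -/
noncomputable def frob {m n : ℕ} (A : Matrix (Fin m) (Fin n) ℝ) : ℝ :=
  Real.sqrt (frobSq A)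

/-- Entrywise ℓ₁ norm. -/
noncomputable def l1 {m n : ℕ} (A : Matrix (Fin m) (Fin n) ℝ) : ℝ :=
  ∑ i, ∑ j, |A i j|

/-- ℓ_{2,1} norm: sum of Euclidean norms of the rows. -/
noncomputable def l21 {m n : ℕ} (A : Matrix (Fin m) (Fin n) ℝ) : ℝ :=
  ∑ i, Real.sqrt (∑ j, (A i j) ^ 2)

/-- Nuclear norm: sum of singular values (square roots of eigenvalues of AᵀA). -/
noncomputable def nuclearNorm {m n : ℕ} (A : Matrix (Fin m) (Fin n) ℝ) : ℝ :=
  ∑ i, Real.sqrt ((show (Aᵀ * A).IsHermitian by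
    simpa using Matrix.isHermitian_conjTranspose_mul_self A).eigenvalues i)

/-- Matrix inner product ⟨P,Q⟩ = tr(PᵀQ). -/
noncomputable def minner {m n : ℕ} (A B : Matrix (Fin m) (Fin n) ℝ) : ℝ :=
  ∑ i, ∑ j, A i j * B i j

/-- ℓ_{2,0}: number of nonzero rows. -/
noncomputable def l20 {m n : ℕ} (A : Matrix (Fin m) (Fin n) ℝ) : ℕ :=
  {i | A i ≠ 0}.ncard
/-- The augmented Lagrangian 𝓛 of the split ALFS problem. -/
noncomputable def AL {d n : ℕ} (X : Matrix (Fin d) (Fin n) ℝ)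
    (T : Matrix (Fin n) (Fin n) ℝ) (α β γ η ρ₁ ρ₂ : ℝ)
    (W : Matrix (Fin n) (Fin d) ℝ) (Z : Matrix (Fin n) (Fin n) ℝ)
    (Wt : Matrix (Fin n) (Fin d) ℝ) (Λ₁ : Matrix (Fin n) (Fin n) ℝ)
    (Λ₂ : Matrix (Fin n) (Fin d) ℝ) : ℝ :=
  frobSq (X - X * W * X) + α * l21 W + β * l21 Wᵀ + γ * nuclearNorm Wt
    + η * l1 (Matrix.hadamard T Z) + minner Λ₁ (W * X - Z) + minner Λ₂ (W - Wt)
    + (ρ₁ / 2) * frobSq (W * X - Z) + (ρ₂ / 2) * frobSq (W - Wt)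

/-- (W*, Z*, W̃*, Λ₁*, Λ₂*) is a saddle point of the augmented Lagrangian 𝓛. -/
def IsSaddle {d n : ℕ} (X : Matrix (Fin d) (Fin n) ℝ)
    (T : Matrix (Fin n) (Fin n) ℝ) (α β γ η ρ₁ ρ₂ : ℝ)
    (Ws : Matrix (Fin n) (Fin d) ℝ) (Zs : Matrix (Fin n) (Fin n) ℝ)
    (Wts : Matrix (Fin n) (Fin d) ℝ) (Λ₁s : Matrix (Fin n) (Fin n) ℝ)
    (Λ₂s : Matrix (Fin n) (Fin d) ℝ) : Prop :=
  ∀ (W : Matrix (Fin n) (Fin d) ℝ) (Z : Matrix (Fin n) (Fin n) ℝ)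
    (Wt : Matrix (Fin n) (Fin d) ℝ) (Λ₁ : Matrix (Fin n) (Fin n) ℝ)
    (Λ₂ : Matrix (Fin n) (Fin d) ℝ),
    AL X T α β γ η ρ₁ ρ₂ Ws Zs Wts Λ₁ Λ₂ ≤ AL X T α β γ η ρ₁ ρ₂ Ws Zs Wts Λ₁s Λ₂s
    ∧ AL X T α β γ η ρ₁ ρ₂ Ws Zs Wts Λ₁s Λ₂s ≤ AL X T α β γ η ρ₁ ρ₂ W Z Wt Λ₁s Λ₂s

/-- The ADMM iterates for the split ALFS problem: `W (k+1)` is a minimizer of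
`W ↦ 𝓛(W, Z k, W̃ k, Λ₁ k, Λ₂ k)`, then `Z`, then `W̃` are updated as (the) minimizers of
their respective subproblems, and the multipliers are updated by gradient ascent steps. -/
def IsADMMSequence {d n : ℕ} (X : Matrix (Fin d) (Fin n) ℝ)
    (T : Matrix (Fin n) (Fin n) ℝ) (α β γ η ρ₁ ρ₂ : ℝ)
    (W : ℕ → Matrix (Fin n) (Fin d) ℝ) (Z : ℕ → Matrix (Fin n) (Fin n) ℝ)
    (Wt : ℕ → Matrix (Fin n) (Fin d) ℝ) (Λ₁ : ℕ → Matrix (Fin n) (Fin n) ℝ)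
    (Λ₂ : ℕ → Matrix (Fin n) (Fin d) ℝ) : Prop :=
  (∀ k, ∀ W', AL X T α β γ η ρ₁ ρ₂ (W (k+1)) (Z k) (Wt k) (Λ₁ k) (Λ₂ k)
      ≤ AL X T α β γ η ρ₁ ρ₂ W' (Z k) (Wt k) (Λ₁ k) (Λ₂ k))
  ∧ (∀ k, ∀ Z', AL X T α β γ η ρ₁ ρ₂ (W (k+1)) (Z (k+1)) (Wt k) (Λ₁ k) (Λ₂ k)
      ≤ AL X T α β γ η ρ₁ ρ₂ (W (k+1)) Z' (Wt k) (Λ₁ k) (Λ₂ k))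
  ∧ (∀ k, ∀ Wt', AL X T α β γ η ρ₁ ρ₂ (W (k+1)) (Z (k+1)) (Wt (k+1)) (Λ₁ k) (Λ₂ k)
      ≤ AL X T α β γ η ρ₁ ρ₂ (W (k+1)) (Z (k+1)) Wt' (Λ₁ k) (Λ₂ k))
  ∧ (∀ k, Λ₁ (k+1) = Λ₁ k + ρ₁ • (W (k+1) * X - Z (k+1)))
  ∧ (∀ k, Λ₂ (k+1) = Λ₂ k + ρ₂ • (W (k+1) - Wt (k+1)))


-- ===== auxiliary machinery =====

lemma Matrix.isHermitian_transpose_mul_self {m n : ℕ} (A : Matrix (Fin m) (Fin n) ℝ) :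
    (Aᵀ * A).IsHermitian := by
  simpa using Matrix.isHermitian_conjTranspose_mul_self A


section API
variable {m n : ℕ} (A B C : Matrix (Fin m) (Fin n) ℝ)

lemma minner_comm : minner A B = minner B A := by
  simp [minner, mul_comm]

lemma minner_add_left : minner (A + B) C = minner A C + minner B C := by
  simp [minner, Matrix.add_apply, add_mul, Finset.sum_add_distrib]

lemma minner_add_right : minner A (B + C) = minner A B + minner A C := by
  simp [minner, Matrix.add_apply, mul_add, Finset.sum_add_distrib]

lemma minner_sub_left : minner (A - B) C = minner A C - minner B C := by
  simp [minner, Matrix.sub_apply, sub_mul, Finset.sum_sub_distrib]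

lemma minner_sub_right : minner A (B - C) = minner A B - minner A C := by
  simp [minner, Matrix.sub_apply, mul_sub, Finset.sum_sub_distrib]

lemma minner_smul_left (t : ℝ) : minner (t • A) B = t * minner A B := by
  simp [minner, Matrix.smul_apply, Finset.mul_sum, smul_eq_mul, mul_assoc]

lemma minner_smul_right (t : ℝ) : minner A (t • B) = t * minner A B := by
  simp [minner, Matrix.smul_apply, Finset.mul_sum, smul_eq_mul]
  congr 1; ext i; congr 1; ext j; ring

lemma frobSq_eq_minner : frobSq A = minner A A := by
  simp [frobSq, minner, sq]

lemma frobSq_nonneg : 0 ≤ frobSq A :=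
  Finset.sum_nonneg fun _ _ => Finset.sum_nonneg fun _ _ => sq_nonneg _

lemma eq_zero_of_frobSq_le (h : frobSq A ≤ 0) : A = 0 := by
  have h0 : frobSq A = 0 := le_antisymm h (frobSq_nonneg A)
  ext i j
  have h1 : ∑ i, ∑ j, (A i j)^2 = 0 := h0
  have h2 : ∀ i ∈ Finset.univ, (0:ℝ) ≤ ∑ j, (A i j)^2 :=
    fun _ _ => Finset.sum_nonneg fun _ _ => sq_nonneg _
  have h3 := (Finset.sum_eq_zero_iff_of_nonneg h2).1 h1 i (Finset.mem_univ i)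
  have h4 := (Finset.sum_eq_zero_iff_of_nonneg (fun _ _ => sq_nonneg (A i _))).1 h3 j (Finset.mem_univ j)
  simpa using pow_eq_zero_iff (n := 2) (by norm_num) |>.1 h4

lemma frobSq_neg : frobSq (-A) = frobSq A := by simp [frobSq]

end API

/-- The θ → 0 trick. -/
lemma div_trick {a c : ℝ} (h : ∀ t : ℝ, 0 < t → t ≤ 1 → t * a ≤ t^2 * c) : a ≤ 0 := by
  by_contra hc
  push_neg at hc
  rcases le_or_gt c 0 with h0 | h0
  · have := h 1 one_pos le_rfl
    nlinarith
  · set t := min 1 (a / (2 * c)) with ht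
    have hta : 0 < a / (2*c) := by positivity
    have htpos : 0 < t := lt_min one_pos hta
    have ht1 : t ≤ 1 := min_le_left _ _
    have h2 : t ≤ a / (2*c) := min_le_right _ _
    have h3 := h t htpos ht1
    have hac : (a / (2*c)) * c = a / 2 := by field_simp
    have h4 : t * c ≤ a / 2 := by
      calc t * c ≤ (a / (2*c)) * c := by nlinarith
      _ = a / 2 := hac
    have h5 : t^2 * c = t * (t * c) := by ring
    have h6 : t * (t*c) ≤ t * (a/2) := by nlinarith
    have h7 : t * a ≤ t * (a/2) := by linarith [h3, h5 ▸ h3]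
    nlinarith



section Combo
variable {m n : ℕ}

/-- row-wise Minkowski. -/
lemma sqrt_sum_sq_combo (t : ℝ) (ht0 : 0 ≤ t) (ht1 : t ≤ 1) (a b : Fin n → ℝ) :
    Real.sqrt (∑ j, ((1-t) * a j + t * b j)^2)
      ≤ (1-t) * Real.sqrt (∑ j, (a j)^2) + t * Real.sqrt (∑ j, (b j)^2) := by
  set A := Real.sqrt (∑ j, (a j)^2) with hA
  set B := Real.sqrt (∑ j, (b j)^2) with hB
  have hA0 : 0 ≤ A := Real.sqrt_nonneg _
  have hB0 : 0 ≤ B := Real.sqrt_nonneg _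
  have hA2 : A^2 = ∑ j, (a j)^2 := Real.sq_sqrt (by positivity)
  have hB2 : B^2 = ∑ j, (b j)^2 := Real.sq_sqrt (by positivity)
  have hcs : ∑ j, a j * b j ≤ A * B :=
    Real.sum_mul_le_sqrt_mul_sqrt _ _ _
  have hRHS : 0 ≤ (1-t) * A + t * B := add_nonneg (mul_nonneg (by linarith) hA0) (mul_nonneg ht0 hB0)
  rw [show ((1:ℝ)-t) * A + t * B = Real.sqrt (((1-t)*A + t*B)^2) from
    (Real.sqrt_sq hRHS).symm]
  apply Real.sqrt_le_sqrt
  have hexp : ∑ j, ((1-t) * a j + t * b j)^2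
      = (1-t)^2 * (∑ j, (a j)^2) + 2*(1-t)*t*(∑ j, a j * b j) + t^2 * (∑ j, (b j)^2) := by
    rw [Finset.mul_sum, Finset.mul_sum, Finset.mul_sum, ← Finset.sum_add_distrib,
      ← Finset.sum_add_distrib]
    exact Finset.sum_congr rfl fun j _ => by ring
  rw [hexp, ← hA2, ← hB2]
  nlinarith [mul_le_mul_of_nonneg_left hcs (mul_nonneg (sub_nonneg.2 ht1) ht0)]

lemma l21_combo (t : ℝ) (ht0 : 0 ≤ t) (ht1 : t ≤ 1) (A B : Matrix (Fin m) (Fin n) ℝ) :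
    l21 (A + t • (B - A)) ≤ l21 A + t * (l21 B - l21 A) := by
  have h : l21 A + t * (l21 B - l21 A) = (1-t) * l21 A + t * l21 B := by ring
  rw [h, l21, l21, l21, Finset.mul_sum, Finset.mul_sum, ← Finset.sum_add_distrib]
  apply Finset.sum_le_sum
  intro i _
  have := sqrt_sum_sq_combo t ht0 ht1 (fun j => A i j) (fun j => B i j)
  have heq : ∀ j, (A + t • (B - A)) i j = (1-t) * A i j + t * B i j := by
    intro j; simp [Matrix.add_apply, Matrix.smul_apply, Matrix.sub_apply]; ring
  simp only [heq]
  exact this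

lemma l1_combo (t : ℝ) (ht0 : 0 ≤ t) (ht1 : t ≤ 1) (A B : Matrix (Fin m) (Fin n) ℝ) :
    l1 (A + t • (B - A)) ≤ l1 A + t * (l1 B - l1 A) := by
  have h : l1 A + t * (l1 B - l1 A) = (1-t) * l1 A + t * l1 B := by ring
  rw [h, l1, l1, l1]
  rw [Finset.mul_sum, Finset.mul_sum, ← Finset.sum_add_distrib]
  apply Finset.sum_le_sum; intro i _
  rw [Finset.mul_sum, Finset.mul_sum, ← Finset.sum_add_distrib]
  apply Finset.sum_le_sum; intro j _
  have : (A + t • (B - A)) i j = (1-t) * A i j + t * B i j := by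
    simp [Matrix.add_apply, Matrix.smul_apply, Matrix.sub_apply]; ring
  rw [this]
  calc |(1-t) * A i j + t * B i j| ≤ |(1-t) * A i j| + |t * B i j| := abs_add_le _ _
    _ = (1-t) * |A i j| + t * |B i j| := by
        rw [abs_mul, abs_mul, abs_of_nonneg (by linarith), abs_of_nonneg ht0]

end Combo



section Nuclear
variable {m n : ℕ}

lemma dot_mulVec_mulVec (A : Matrix (Fin m) (Fin n) ℝ) (x y : Fin n → ℝ) :
    (A *ᵥ x) ⬝ᵥ (A *ᵥ y) = x ⬝ᵥ ((Aᴴ * A) *ᵥ y) := by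
  rw [Matrix.dotProduct_mulVec, Matrix.vecMul_mulVec, ← Matrix.dotProduct_mulVec,
    Matrix.conjTranspose_eq_transpose_of_trivial]

lemma sum_dot_eq_minner (Q A : Matrix (Fin m) (Fin n) ℝ) (v : Fin n → Fin n → ℝ)
    (hv : ∀ a c, ∑ i, v i a * v i c = if a = c then 1 else 0) :
    ∑ i, (Q *ᵥ v i) ⬝ᵥ (A *ᵥ v i) = minner Q A := by
  calc ∑ i, (Q *ᵥ v i) ⬝ᵥ (A *ᵥ v i)
      = ∑ i, ∑ a, (∑ b, Q a b * v i b) * (∑ c, A a c * v i c) := by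
        simp [Matrix.mulVec, dotProduct]
    _ = ∑ i, ∑ a, ∑ b, ∑ c, (Q a b * A a c) * (v i b * v i c) := by
        refine Finset.sum_congr rfl fun i _ => Finset.sum_congr rfl fun a _ => ?_
        rw [Finset.sum_mul_sum]
        exact Finset.sum_congr rfl fun b _ => Finset.sum_congr rfl fun c _ => by ring
    _ = ∑ a, ∑ b, ∑ c, (Q a b * A a c) * (∑ i, v i b * v i c) := by
        rw [Finset.sum_comm]
        refine Finset.sum_congr rfl fun a _ => ?_
        rw [Finset.sum_comm]
        refine Finset.sum_congr rfl fun b _ => ?_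
        rw [Finset.sum_comm]
        refine Finset.sum_congr rfl fun c _ => ?_
        rw [Finset.mul_sum]
    _ = ∑ a, ∑ b, Q a b * A a b := by
        refine Finset.sum_congr rfl fun a _ => Finset.sum_congr rfl fun b _ => ?_
        simp [hv, mul_ite, Finset.sum_ite_eq]
    _ = minner Q A := rfl

lemma sum_dot_sq (x : Fin n → ℝ) (v : Fin n → Fin n → ℝ)
    (hv : ∀ a c, ∑ i, v i a * v i c = if a = c then 1 else 0) :
    ∑ i, (v i ⬝ᵥ x)^2 = x ⬝ᵥ x := by
  calc ∑ i, (v i ⬝ᵥ x)^2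
      = ∑ i, ∑ b, ∑ c, (x b * x c) * (v i b * v i c) := by
        refine Finset.sum_congr rfl fun i _ => ?_
        rw [sq, show v i ⬝ᵥ x = ∑ b, v i b * x b from rfl, Finset.sum_mul_sum]
        exact Finset.sum_congr rfl fun b _ => Finset.sum_congr rfl fun c _ => by ring
    _ = ∑ b, ∑ c, (x b * x c) * (∑ i, v i b * v i c) := by
        rw [Finset.sum_comm]
        refine Finset.sum_congr rfl fun b _ => ?_
        rw [Finset.sum_comm]
        refine Finset.sum_congr rfl fun c _ => ?_
        rw [Finset.mul_sum]
    _ = ∑ b, x b * x b := by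
        refine Finset.sum_congr rfl fun b _ => ?_
        simp [hv, mul_ite, Finset.sum_ite_eq]
    _ = x ⬝ᵥ x := rfl

variable (A : Matrix (Fin m) (Fin n) ℝ)

/-- eigenvector functions of AᴴA -/
noncomputable def eigv (i : Fin n) : Fin n → ℝ :=
  ⇑((Matrix.isHermitian_transpose_mul_self A).eigenvectorBasis i)

lemma eigv_row_ortho : ∀ a c, ∑ i, eigv A i a * eigv A i c = if a = c then 1 else 0 := by
  intro a c
  set hA := Matrix.isHermitian_transpose_mul_self A with hhA
  have hmem : (hA.eigenvectorUnitary : Matrix (Fin n) (Fin n) ℝ)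
      * star (hA.eigenvectorUnitary : Matrix (Fin n) (Fin n) ℝ) = 1 :=
    Matrix.mem_unitaryGroup_iff.mp (hA.eigenvectorUnitary).2
  have h0 := congrFun (congrFun hmem a) c
  rw [Matrix.mul_apply, Matrix.one_apply] at h0
  rw [← h0]
  refine Finset.sum_congr rfl fun i _ => ?_
  have h1 : (star (hA.eigenvectorUnitary : Matrix (Fin n) (Fin n) ℝ)) i c
      = (hA.eigenvectorUnitary : Matrix (Fin n) (Fin n) ℝ) c i := by
    simp [Matrix.star_eq_conjTranspose, Matrix.conjTranspose_apply]
  rw [h1, Matrix.IsHermitian.eigenvectorUnitary_apply, Matrix.IsHermitian.eigenvectorUnitary_apply]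
  rfl

lemma eigv_col_ortho : ∀ i j, eigv A i ⬝ᵥ eigv A j = if i = j then 1 else 0 := by
  intro i j
  set hA := Matrix.isHermitian_transpose_mul_self A
  have horth := hA.eigenvectorBasis.orthonormal
  have := orthonormal_iff_ite.mp horth i j
  rw [← this]
  simp only [PiLp.inner_apply, RCLike.inner_apply, conj_trivial]
  exact Finset.sum_congr rfl fun x _ => mul_comm _ _

lemma dot_A_eigv (i j : Fin n) :
    (A *ᵥ eigv A i) ⬝ᵥ (A *ᵥ eigv A j)
      = (Matrix.isHermitian_transpose_mul_self A).eigenvalues j * (if i = j then 1 else 0) := by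
  set hA := Matrix.isHermitian_transpose_mul_self A
  rw [dot_mulVec_mulVec]
  have : (Aᴴ * A) *ᵥ eigv A j = hA.eigenvalues j • eigv A j := by
    have := hA.mulVec_eigenvectorBasis j
    exact this
  rw [this, dotProduct_smul, smul_eq_mul, eigv_col_ortho]

lemma eigval_nonneg (i : Fin n) :
    0 ≤ (Matrix.isHermitian_transpose_mul_self A).eigenvalues i :=
  Matrix.eigenvalues_conjTranspose_mul_self_nonneg A i

/-- Von Neumann-lite upper bound -/
lemma minner_le_nuclear (Q : Matrix (Fin m) (Fin n) ℝ)
    (hQ : ∀ x : Fin n → ℝ, (Q *ᵥ x) ⬝ᵥ (Q *ᵥ x) ≤ x ⬝ᵥ x) :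
    minner Q A ≤ nuclearNorm A := by
  rw [← sum_dot_eq_minner Q A (eigv A) (eigv_row_ortho A), nuclearNorm]
  apply Finset.sum_le_sum
  intro i _
  have hcs : (Q *ᵥ eigv A i) ⬝ᵥ (A *ᵥ eigv A i)
      ≤ Real.sqrt ((Q *ᵥ eigv A i) ⬝ᵥ (Q *ᵥ eigv A i)) * Real.sqrt ((A *ᵥ eigv A i) ⬝ᵥ (A *ᵥ eigv A i)) := by
    have := Real.sum_mul_le_sqrt_mul_sqrt Finset.univ (fun a => (Q *ᵥ eigv A i) a) (fun a => (A *ᵥ eigv A i) a)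
    simpa [dotProduct, sq] using this
  have h1 : (Q *ᵥ eigv A i) ⬝ᵥ (Q *ᵥ eigv A i) ≤ 1 := by
    have := hQ (eigv A i)
    have h2 : eigv A i ⬝ᵥ eigv A i = 1 := by simpa using eigv_col_ortho A i i
    linarith [this, h2.le]
  have h3 : (A *ᵥ eigv A i) ⬝ᵥ (A *ᵥ eigv A i)
      = (Matrix.isHermitian_transpose_mul_self A).eigenvalues i := by
    simpa using dot_A_eigv A i i
  calc (Q *ᵥ eigv A i) ⬝ᵥ (A *ᵥ eigv A i)
      ≤ Real.sqrt ((Q *ᵥ eigv A i) ⬝ᵥ (Q *ᵥ eigv A i)) * Real.sqrt ((A *ᵥ eigv A i) ⬝ᵥ (A *ᵥ eigv A i)) := hcs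
    _ ≤ 1 * Real.sqrt ((Matrix.isHermitian_transpose_mul_self A).eigenvalues i) := by
        rw [h3]
        apply mul_le_mul_of_nonneg_right _ (Real.sqrt_nonneg _)
        calc Real.sqrt ((Q *ᵥ eigv A i) ⬝ᵥ (Q *ᵥ eigv A i)) ≤ Real.sqrt 1 := Real.sqrt_le_sqrt h1
          _ = 1 := Real.sqrt_one
    _ = Real.sqrt ((Matrix.isHermitian_transpose_mul_self A).eigenvalues i) := one_mul _


lemma vecMulVec_mulVec' (u : Fin m → ℝ) (w x : Fin n → ℝ) :
    Matrix.vecMulVec u w *ᵥ x = (w ⬝ᵥ x) • u := by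
  ext a
  simp only [Matrix.mulVec, dotProduct, Matrix.vecMulVec_apply, Pi.smul_apply,
    smul_eq_mul]
  rw [Finset.sum_mul]
  exact Finset.sum_congr rfl fun b _ => by ring

lemma sum_mulVec' {k : ℕ} (M : Fin k → Matrix (Fin m) (Fin n) ℝ) (x : Fin n → ℝ) :
    (∑ i, M i) *ᵥ x = ∑ i, M i *ᵥ x := by
  ext a
  simp only [Matrix.mulVec, dotProduct, Finset.sum_apply]
  rw [Finset.sum_comm]
  refine Finset.sum_congr rfl fun b _ => ?_
  rw [show (∑ i : Fin k, M i) a b = ∑ i : Fin k, M i a b from by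
    rw [Matrix.sum_apply], Finset.sum_mul]


lemma sum_dotProduct' {k p : ℕ} (f : Fin k → Fin p → ℝ) (y : Fin p → ℝ) :
    (∑ i, f i) ⬝ᵥ y = ∑ i, f i ⬝ᵥ y := by
  simp only [dotProduct, Finset.sum_apply, Finset.sum_mul]
  exact Finset.sum_comm

lemma dotProduct_sum' {k p : ℕ} (y : Fin p → ℝ) (f : Fin k → Fin p → ℝ) :
    y ⬝ᵥ (∑ i, f i) = ∑ i, y ⬝ᵥ f i := by
  simp only [dotProduct, Finset.sum_apply, Finset.mul_sum]
  exact Finset.sum_comm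

/-- attainment matrix -/
noncomputable def attainQ : Matrix (Fin m) (Fin n) ℝ :=
  ∑ i, (Real.sqrt ((Matrix.isHermitian_transpose_mul_self A).eigenvalues i))⁻¹ •
    Matrix.vecMulVec (A *ᵥ eigv A i) (eigv A i)

lemma attainQ_mulVec (x : Fin n → ℝ) :
    attainQ A *ᵥ x = ∑ i, ((Real.sqrt ((Matrix.isHermitian_transpose_mul_self A).eigenvalues i))⁻¹
      * (eigv A i ⬝ᵥ x)) • (A *ᵥ eigv A i) := by
  rw [attainQ, sum_mulVec']
  refine Finset.sum_congr rfl fun i _ => ?_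
  rw [Matrix.smul_mulVec, vecMulVec_mulVec', smul_smul]


lemma inv_sqrt_mul_self {l : ℝ} (hl : 0 ≤ l) : (Real.sqrt l)⁻¹ * l = Real.sqrt l := by
  rcases eq_or_lt_of_le hl with h | h
  · simp [← h]
  · have hspos : 0 < Real.sqrt l := Real.sqrt_pos.2 h
    have hms : Real.sqrt l * Real.sqrt l = l := Real.mul_self_sqrt hl
    field_simp
    rw [Real.sq_sqrt hl]

lemma attainQ_contract (x : Fin n → ℝ) :
    (attainQ A *ᵥ x) ⬝ᵥ (attainQ A *ᵥ x) ≤ x ⬝ᵥ x := by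
  set hA := Matrix.isHermitian_transpose_mul_self A with hhA
  set c : Fin n → ℝ := fun i => (Real.sqrt (hA.eigenvalues i))⁻¹ with hc
  set s : Fin n → ℝ := fun i => c i * (eigv A i ⬝ᵥ x) with hs
  have hQx : attainQ A *ᵥ x = ∑ i, s i • (A *ᵥ eigv A i) := attainQ_mulVec A x
  rw [hQx]
  have hdd : (∑ i, s i • (A *ᵥ eigv A i)) ⬝ᵥ (∑ j, s j • (A *ᵥ eigv A j))
      = ∑ i, ∑ j, (s i * s j) * ((A *ᵥ eigv A i) ⬝ᵥ (A *ᵥ eigv A j)) := by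
    rw [sum_dotProduct']
    refine Finset.sum_congr rfl fun i _ => ?_
    rw [dotProduct_sum']
    refine Finset.sum_congr rfl fun j _ => ?_
    rw [smul_dotProduct, dotProduct_smul, smul_eq_mul, smul_eq_mul]
    ring
  rw [hdd]
  have hterm : ∀ i, ∑ j, (s i * s j) * ((A *ᵥ eigv A i) ⬝ᵥ (A *ᵥ eigv A j))
      = s i ^ 2 * hA.eigenvalues i := by
    intro i
    have : ∀ j, (s i * s j) * ((A *ᵥ eigv A i) ⬝ᵥ (A *ᵥ eigv A j))
        = (if i = j then (s i * s j) * hA.eigenvalues j else 0) := by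
      intro j
      rw [dot_A_eigv]
      by_cases h : i = j <;> simp [h]
    rw [Finset.sum_congr rfl fun j _ => this j, Finset.sum_ite_eq]
    simp [sq]
  rw [Finset.sum_congr rfl fun i _ => hterm i]
  rw [← sum_dot_sq x (eigv A) (eigv_row_ortho A)]
  apply Finset.sum_le_sum
  intro i _
  have hli := eigval_nonneg A i
  have hkey : s i ^ 2 * hA.eigenvalues i ≤ (eigv A i ⬝ᵥ x) ^ 2 := by
    have : s i ^ 2 * hA.eigenvalues i = (c i ^ 2 * hA.eigenvalues i) * (eigv A i ⬝ᵥ x)^2 := by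
      rw [hs]; ring
    rw [this]
    have hcl : c i ^ 2 * hA.eigenvalues i ≤ 1 := by
      rcases eq_or_lt_of_le hli with h | h
      · rw [← h]; norm_num
      · have hsq : Real.sqrt (hA.eigenvalues i) ^ 2 = hA.eigenvalues i := Real.sq_sqrt hli
        rw [hc]
        have hspos : 0 < Real.sqrt (hA.eigenvalues i) := Real.sqrt_pos.2 h
        rw [show ((Real.sqrt (hA.eigenvalues i))⁻¹)^2 * hA.eigenvalues i
          = hA.eigenvalues i / (Real.sqrt (hA.eigenvalues i))^2 from by ring, hsq]
        rw [div_self h.ne']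
    nlinarith [sq_nonneg (eigv A i ⬝ᵥ x)]
  exact hkey

lemma attainQ_minner : minner (attainQ A) A = nuclearNorm A := by
  set hA := Matrix.isHermitian_transpose_mul_self A with hhA
  rw [← sum_dot_eq_minner (attainQ A) A (eigv A) (eigv_row_ortho A), nuclearNorm]
  refine Finset.sum_congr rfl fun j _ => ?_
  rw [attainQ_mulVec A (eigv A j)]
  rw [sum_dotProduct']
  have : ∀ i, (((Real.sqrt (hA.eigenvalues i))⁻¹ * (eigv A i ⬝ᵥ eigv A j)) • (A *ᵥ eigv A i))
        ⬝ᵥ (A *ᵥ eigv A j)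
      = if i = j then (Real.sqrt (hA.eigenvalues j))⁻¹ * hA.eigenvalues j else 0 := by
    intro i
    rw [smul_dotProduct, smul_eq_mul, dot_A_eigv, eigv_col_ortho]
    by_cases h : i = j <;> simp [h]
  rw [Finset.sum_congr rfl fun i _ => this i]
  rw [Finset.sum_ite_eq' Finset.univ j]
  simp [inv_sqrt_mul_self (eigval_nonneg A j)]

lemma nuclear_combo (t : ℝ) (ht0 : 0 ≤ t) (ht1 : t ≤ 1)
    (A B : Matrix (Fin m) (Fin n) ℝ) :
    nuclearNorm (A + t • (B - A)) ≤ nuclearNorm A + t * (nuclearNorm B - nuclearNorm A) := by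
  set C := A + t • (B - A) with hC
  set Q := attainQ C with hQ
  have hcon := attainQ_contract C
  have hmA : minner Q A ≤ nuclearNorm A := minner_le_nuclear A Q hcon
  have hmB : minner Q B ≤ nuclearNorm B := minner_le_nuclear B Q hcon
  have hlin : minner Q C = minner Q A + t * (minner Q B - minner Q A) := by
    simp only [hC, minner, Matrix.add_apply, Matrix.smul_apply, Matrix.sub_apply, smul_eq_mul]
    have hrw : ∀ i j, Q i j * (A i j + t * (B i j - A i j))
        = Q i j * A i j + (t * (Q i j * B i j) - t * (Q i j * A i j)) := fun i j => by ring
    simp only [hrw, Finset.sum_add_distrib, Finset.sum_sub_distrib, ← Finset.mul_sum]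
    ring
  have hval : nuclearNorm C = minner Q C := (attainQ_minner C).symm
  rw [hval, hlin]
  nlinarith [hmA, hmB]

end Nuclear

section Part4
noncomputable def fobj {d n : ℕ} (X : Matrix (Fin d) (Fin n) ℝ) (α β : ℝ)
    (W : Matrix (Fin n) (Fin d) ℝ) : ℝ :=
  frobSq (X - X * W * X) + α * l21 W + β * l21 Wᵀ

noncomputable def g1obj {n : ℕ} (T : Matrix (Fin n) (Fin n) ℝ) (η : ℝ)
    (Z : Matrix (Fin n) (Fin n) ℝ) : ℝ := η * l1 (Matrix.hadamard T Z)

noncomputable def g2obj {d n : ℕ} (γ : ℝ) (Wt : Matrix (Fin n) (Fin d) ℝ) : ℝ :=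
  γ * nuclearNorm Wt

lemma AL_decomp {d n : ℕ} (X : Matrix (Fin d) (Fin n) ℝ) (T : Matrix (Fin n) (Fin n) ℝ)
    (α β γ η ρ₁ ρ₂ : ℝ) (W : Matrix (Fin n) (Fin d) ℝ) (Z : Matrix (Fin n) (Fin n) ℝ)
    (Wt : Matrix (Fin n) (Fin d) ℝ) (Λ₁ : Matrix (Fin n) (Fin n) ℝ)
    (Λ₂ : Matrix (Fin n) (Fin d) ℝ) :
    AL X T α β γ η ρ₁ ρ₂ W Z Wt Λ₁ Λ₂
      = fobj X α β W + g1obj T η Z + g2obj γ Wt + minner Λ₁ (W * X - Z)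
        + minner Λ₂ (W - Wt) + ρ₁ / 2 * frobSq (W * X - Z) + ρ₂ / 2 * frobSq (W - Wt) := by
  rw [AL, fobj, g1obj, g2obj]; ring

section FrobMore
variable {m n : ℕ}

lemma frobSq_add_smul (P D : Matrix (Fin m) (Fin n) ℝ) (t : ℝ) :
    frobSq (P + t • D) = frobSq P + 2*t*minner P D + t^2 * frobSq D := by
  simp only [frobSq_eq_minner, minner_add_left, minner_add_right, minner_smul_left,
    minner_smul_right]
  rw [minner_comm D P]; ring

lemma frobSq_add' (P D : Matrix (Fin m) (Fin n) ℝ) :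
    frobSq (P + D) = frobSq P + 2*minner P D + frobSq D := by
  have h := frobSq_add_smul P D 1
  rw [one_smul] at h
  simpa using h

lemma frobSq_smul (t : ℝ) (A : Matrix (Fin m) (Fin n) ℝ) :
    frobSq (t • A) = t^2 * frobSq A := by
  simp only [frobSq_eq_minner, minner_smul_left, minner_smul_right]; ring

lemma frobSq_sub_comm (A B : Matrix (Fin m) (Fin n) ℝ) :
    frobSq (A - B) = frobSq (B - A) := by
  rw [← frobSq_neg (A - B), neg_sub]

lemma minner_zero_right (A : Matrix (Fin m) (Fin n) ℝ) : minner A 0 = 0 := by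
  simp [minner]

lemma frobSq_zero : frobSq (0 : Matrix (Fin m) (Fin n) ℝ) = 0 := by simp [frobSq]

lemma frobSq_combo (t : ℝ) (ht0 : 0 ≤ t) (ht1 : t ≤ 1) (P Q : Matrix (Fin m) (Fin n) ℝ) :
    frobSq (P + t • (Q - P)) ≤ frobSq P + t * (frobSq Q - frobSq P) := by
  rw [frobSq_add_smul]
  have hQ : frobSq Q = frobSq P + 2*minner P (Q - P) + frobSq (Q - P) := by
    have h := frobSq_add' P (Q - P)
    rw [show P + (Q - P) = Q from by abel] at h
    linarith
  nlinarith [mul_nonneg (mul_nonneg ht0 (sub_nonneg.2 ht1)) (frobSq_nonneg (Q - P))]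

end FrobMore

section Combos
variable {d n : ℕ}

lemma fobj_combo (X : Matrix (Fin d) (Fin n) ℝ) {α β : ℝ} (hα : 0 ≤ α) (hβ : 0 ≤ β)
    (t : ℝ) (ht0 : 0 ≤ t) (ht1 : t ≤ 1) (U V : Matrix (Fin n) (Fin d) ℝ) :
    fobj X α β (U + t • (V - U)) ≤ fobj X α β U + t * (fobj X α β V - fobj X α β U) := by
  have hmat : X - X * (U + t • (V - U)) * X
      = (X - X * U * X) + t • ((X - X * V * X) - (X - X * U * X)) := by
    rw [Matrix.mul_add, Matrix.add_mul, Matrix.mul_smul, Matrix.smul_mul,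
      Matrix.mul_sub, Matrix.sub_mul, smul_sub]
    module
  have htrans : (U + t • (V - U))ᵀ = Uᵀ + t • (Vᵀ - Uᵀ) := by
    rw [Matrix.transpose_add, Matrix.transpose_smul, Matrix.transpose_sub]
  have h1 := frobSq_combo t ht0 ht1 (X - X * U * X) (X - X * V * X)
  rw [← hmat] at h1
  have h2 := l21_combo t ht0 ht1 U V
  have h3 := l21_combo t ht0 ht1 Uᵀ Vᵀ
  rw [fobj, fobj, fobj, htrans]
  nlinarith [mul_le_mul_of_nonneg_left h2 hα, mul_le_mul_of_nonneg_left h3 hβ]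

lemma g1obj_combo (T : Matrix (Fin n) (Fin n) ℝ) {η : ℝ} (hη : 0 ≤ η)
    (t : ℝ) (ht0 : 0 ≤ t) (ht1 : t ≤ 1) (U V : Matrix (Fin n) (Fin n) ℝ) :
    g1obj T η (U + t • (V - U)) ≤ g1obj T η U + t * (g1obj T η V - g1obj T η U) := by
  have hhad : Matrix.hadamard T (U + t • (V - U))
      = Matrix.hadamard T U + t • (Matrix.hadamard T V - Matrix.hadamard T U) := by
    ext i j
    simp [Matrix.hadamard, Matrix.add_apply, Matrix.smul_apply, Matrix.sub_apply]
    ring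
  rw [g1obj, g1obj, g1obj, hhad]
  have h := l1_combo t ht0 ht1 (Matrix.hadamard T U) (Matrix.hadamard T V)
  nlinarith [mul_le_mul_of_nonneg_left h hη]

lemma g2obj_combo {γ : ℝ} (hγ : 0 ≤ γ) (t : ℝ) (ht0 : 0 ≤ t) (ht1 : t ≤ 1)
    (U V : Matrix (Fin n) (Fin d) ℝ) :
    g2obj γ (U + t • (V - U)) ≤ g2obj γ U + t * (g2obj γ V - g2obj γ U) := by
  rw [g2obj, g2obj, g2obj]
  have h := nuclear_combo t ht0 ht1 U V
  nlinarith [mul_le_mul_of_nonneg_left h hγ]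

end Combos

section Steps
variable {d n : ℕ} {X : Matrix (Fin d) (Fin n) ℝ} {T : Matrix (Fin n) (Fin n) ℝ}
  {α β γ η ρ₁ ρ₂ : ℝ}

lemma Zstep_subgrad (hη : 0 ≤ η)
    {Wp : Matrix (Fin n) (Fin d) ℝ} {Zp : Matrix (Fin n) (Fin n) ℝ}
    {Wtk : Matrix (Fin n) (Fin d) ℝ} {Λ₁ : Matrix (Fin n) (Fin n) ℝ}
    {Λ₂ : Matrix (Fin n) (Fin d) ℝ}
    (hmin : ∀ Z', AL X T α β γ η ρ₁ ρ₂ Wp Zp Wtk Λ₁ Λ₂ ≤ AL X T α β γ η ρ₁ ρ₂ Wp Z' Wtk Λ₁ Λ₂)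
    (z : Matrix (Fin n) (Fin n) ℝ) :
    minner (Λ₁ + ρ₁ • (Wp * X - Zp)) (z - Zp) ≤ g1obj T η z - g1obj T η Zp := by
  have key : minner Λ₁ (z - Zp) + ρ₁ * minner (Wp * X - Zp) (z - Zp)
      - (g1obj T η z - g1obj T η Zp) ≤ 0 := by
    apply div_trick (c := ρ₁/2 * frobSq (z - Zp))
    intro t ht0 ht1
    have h := hmin (Zp + t • (z - Zp))
    rw [AL_decomp, AL_decomp] at h
    have hid : Wp * X - (Zp + t • (z - Zp)) = (Wp * X - Zp) + (-t) • (z - Zp) := by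
      rw [neg_smul]; abel
    rw [hid, frobSq_add_smul, minner_add_right, minner_smul_right] at h
    have hg := g1obj_combo T hη t ht0.le ht1 Zp z
    nlinarith [h, hg]
  rw [minner_add_left, minner_smul_left]
  linarith

lemma Wtstep_subgrad (hγ : 0 ≤ γ)
    {Wp : Matrix (Fin n) (Fin d) ℝ} {Zp : Matrix (Fin n) (Fin n) ℝ}
    {Wtp : Matrix (Fin n) (Fin d) ℝ} {Λ₁ : Matrix (Fin n) (Fin n) ℝ}
    {Λ₂ : Matrix (Fin n) (Fin d) ℝ}
    (hmin : ∀ Wt', AL X T α β γ η ρ₁ ρ₂ Wp Zp Wtp Λ₁ Λ₂ ≤ AL X T α β γ η ρ₁ ρ₂ Wp Zp Wt' Λ₁ Λ₂)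
    (w : Matrix (Fin n) (Fin d) ℝ) :
    minner (Λ₂ + ρ₂ • (Wp - Wtp)) (w - Wtp) ≤ g2obj γ w - g2obj γ Wtp := by
  have key : minner Λ₂ (w - Wtp) + ρ₂ * minner (Wp - Wtp) (w - Wtp)
      - (g2obj γ w - g2obj γ Wtp) ≤ 0 := by
    apply div_trick (c := ρ₂/2 * frobSq (w - Wtp))
    intro t ht0 ht1
    have h := hmin (Wtp + t • (w - Wtp))
    rw [AL_decomp, AL_decomp] at h
    have hid : Wp - (Wtp + t • (w - Wtp)) = (Wp - Wtp) + (-t) • (w - Wtp) := by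
      rw [neg_smul]; abel
    rw [hid, frobSq_add_smul, minner_add_right, minner_smul_right] at h
    have hg := g2obj_combo hγ t ht0.le ht1 Wtp w
    nlinarith [h, hg]
  rw [minner_add_left, minner_smul_left]
  linarith

lemma Wstep_subgrad (hα : 0 ≤ α) (hβ : 0 ≤ β)
    {Wp : Matrix (Fin n) (Fin d) ℝ} {Zk : Matrix (Fin n) (Fin n) ℝ}
    {Wtk : Matrix (Fin n) (Fin d) ℝ} {Λ₁ : Matrix (Fin n) (Fin n) ℝ}
    {Λ₂ : Matrix (Fin n) (Fin d) ℝ}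
    (hmin : ∀ W', AL X T α β γ η ρ₁ ρ₂ Wp Zk Wtk Λ₁ Λ₂ ≤ AL X T α β γ η ρ₁ ρ₂ W' Zk Wtk Λ₁ Λ₂)
    (w : Matrix (Fin n) (Fin d) ℝ) :
    fobj X α β Wp - fobj X α β w
      ≤ minner (Λ₁ + ρ₁ • (Wp * X - Zk)) ((w - Wp) * X)
        + minner (Λ₂ + ρ₂ • (Wp - Wtk)) (w - Wp) := by
  have key : fobj X α β Wp - fobj X α β w
      - (minner Λ₁ ((w - Wp) * X) + ρ₁ * minner (Wp * X - Zk) ((w - Wp) * X)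
        + minner Λ₂ (w - Wp) + ρ₂ * minner (Wp - Wtk) (w - Wp)) ≤ 0 := by
    apply div_trick (c := ρ₁/2 * frobSq ((w - Wp) * X) + ρ₂/2 * frobSq (w - Wp))
    intro t ht0 ht1
    have h := hmin (Wp + t • (w - Wp))
    rw [AL_decomp, AL_decomp] at h
    have hid1 : (Wp + t • (w - Wp)) * X - Zk = (Wp * X - Zk) + t • ((w - Wp) * X) := by
      rw [Matrix.add_mul, Matrix.smul_mul]; abel
    have hid2 : (Wp + t • (w - Wp)) - Wtk = (Wp - Wtk) + t • (w - Wp) := by abel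
    rw [hid1, hid2, frobSq_add_smul, frobSq_add_smul, minner_add_right, minner_add_right,
      minner_smul_right, minner_smul_right] at h
    have hf := fobj_combo X hα hβ t ht0.le ht1 Wp w
    nlinarith [h, hf]
  rw [minner_add_left, minner_smul_left, minner_add_left, minner_smul_left]
  linarith

end Steps

section Saddle
variable {d n : ℕ} {X : Matrix (Fin d) (Fin n) ℝ} {T : Matrix (Fin n) (Fin n) ℝ}
  {α β γ η ρ₁ ρ₂ : ℝ} {Ws : Matrix (Fin n) (Fin d) ℝ} {Zs : Matrix (Fin n) (Fin n) ℝ}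
  {Wts : Matrix (Fin n) (Fin d) ℝ} {Λ₁s : Matrix (Fin n) (Fin n) ℝ}
  {Λ₂s : Matrix (Fin n) (Fin d) ℝ}

lemma saddle_feas (hsad : IsSaddle X T α β γ η ρ₁ ρ₂ Ws Zs Wts Λ₁s Λ₂s) :
    Ws * X - Zs = 0 ∧ Ws - Wts = 0 := by
  constructor
  · have h := (hsad Ws Zs Wts (Λ₁s + (Ws * X - Zs)) Λ₂s).1
    rw [AL_decomp, AL_decomp, minner_add_left] at h
    apply eq_zero_of_frobSq_le
    rw [frobSq_eq_minner]
    linarith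
  · have h := (hsad Ws Zs Wts Λ₁s (Λ₂s + (Ws - Wts))).1
    rw [AL_decomp, AL_decomp, minner_add_left] at h
    apply eq_zero_of_frobSq_le
    rw [frobSq_eq_minner]
    linarith

lemma saddle_linear (hα : 0 ≤ α) (hβ : 0 ≤ β) (hγ : 0 ≤ γ) (hη : 0 ≤ η)
    (hsad : IsSaddle X T α β γ η ρ₁ ρ₂ Ws Zs Wts Λ₁s Λ₂s)
    (hfe1 : Ws * X - Zs = 0) (hfe2 : Ws - Wts = 0)
    (Wc : Matrix (Fin n) (Fin d) ℝ) (Zc : Matrix (Fin n) (Fin n) ℝ)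
    (Wtc : Matrix (Fin n) (Fin d) ℝ) :
    fobj X α β Ws + g1obj T η Zs + g2obj γ Wts
      ≤ fobj X α β Wc + g1obj T η Zc + g2obj γ Wtc
        + minner Λ₁s (Wc * X - Zc) + minner Λ₂s (Wc - Wtc) := by
  have hws : Ws * X = Zs := sub_eq_zero.mp hfe1
  have hwts : Ws = Wts := sub_eq_zero.mp hfe2
  have key : (fobj X α β Ws + g1obj T η Zs + g2obj γ Wts)
      - (fobj X α β Wc + g1obj T η Zc + g2obj γ Wtc
        + minner Λ₁s (Wc * X - Zc) + minner Λ₂s (Wc - Wtc)) ≤ 0 := by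
    apply div_trick (c := ρ₁/2 * frobSq (Wc * X - Zc) + ρ₂/2 * frobSq (Wc - Wtc))
    intro t ht0 ht1
    have h := (hsad (Ws + t • (Wc - Ws)) (Zs + t • (Zc - Zs)) (Wts + t • (Wtc - Wts)) Λ₁s Λ₂s).2
    rw [AL_decomp, AL_decomp] at h
    have hid1 : (Ws + t • (Wc - Ws)) * X - (Zs + t • (Zc - Zs)) = t • (Wc * X - Zc) := by
      rw [Matrix.add_mul, Matrix.smul_mul, Matrix.sub_mul, hws, smul_sub, smul_sub, smul_sub]
      abel
    have hid2 : (Ws + t • (Wc - Ws)) - (Wts + t • (Wtc - Wts)) = t • (Wc - Wtc) := by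
      rw [← hwts, smul_sub, smul_sub, smul_sub]
      abel
    rw [hid1, hid2, hfe1, hfe2, frobSq_smul, frobSq_smul, minner_smul_right,
      minner_smul_right, minner_zero_right, minner_zero_right, frobSq_zero, frobSq_zero] at h
    have hf := fobj_combo X hα hβ t ht0.le ht1 Ws Wc
    have hg1 := g1obj_combo T hη t ht0.le ht1 Zs Zc
    have hg2 := g2obj_combo hγ t ht0.le ht1 Wts Wtc
    nlinarith [h, hf, hg1, hg2]
  linarith

end Saddle

/-- The per-block Boyd identity. -/
lemma block_identity {p q : ℕ} (Λ Λs P ΔZ Dz : Matrix (Fin p) (Fin q) ℝ) {ρ : ℝ}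
    (hρ : ρ ≠ 0) :
    minner (Λ + ρ • P + ρ • ΔZ) (Dz - P) - minner (Λ + ρ • P) Dz + minner Λs P
      = (1/(2*ρ)) * (frobSq (Λ - Λs) - frobSq (Λ + ρ • P - Λs))
        + (ρ/2) * (frobSq (Dz + ΔZ) - frobSq Dz)
        - (ρ/2) * frobSq P - (ρ/2) * frobSq ΔZ - ρ * minner P ΔZ := by
  have hexp : Λ + ρ • P - Λs = (Λ - Λs) + ρ • P := by abel
  rw [hexp, frobSq_add_smul, frobSq_add']
  simp only [minner_add_left, minner_add_right, minner_sub_left, minner_sub_right,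
    minner_smul_left, minner_smul_right, frobSq_eq_minner]
  field_simp
  ring_nf
  linear_combination (2*ρ^2) * minner_comm ΔZ Dz - (2*ρ^2) * minner_comm ΔZ P

end Part4

/-- constraint satisfaction.  Assuming a saddle point of 𝓛 exists,
both constraint violations of the ADMM iterates converge to zero:
‖WᵏX − Zᵏ‖_F → 0 and ‖W̃ᵏ − Wᵏ‖_F → 0. -/
theorem admm_constraint_violations_vanish {d n : ℕ}
    (X : Matrix (Fin d) (Fin n) ℝ) (T : Matrix (Fin n) (Fin n) ℝ)
    (α β γ η ρ₁ ρ₂ : ℝ) (hα : 0 ≤ α) (hβ : 0 ≤ β) (hγ : 0 ≤ γ) (hη : 0 ≤ η)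
    (hρ₁ : 0 < ρ₁) (hρ₂ : 0 < ρ₂)
    (W : ℕ → Matrix (Fin n) (Fin d) ℝ) (Z : ℕ → Matrix (Fin n) (Fin n) ℝ)
    (Wt : ℕ → Matrix (Fin n) (Fin d) ℝ) (Λ₁ : ℕ → Matrix (Fin n) (Fin n) ℝ)
    (Λ₂ : ℕ → Matrix (Fin n) (Fin d) ℝ)
    (hadmm : IsADMMSequence X T α β γ η ρ₁ ρ₂ W Z Wt Λ₁ Λ₂)
    (hsaddle : ∃ Ws Zs Wts Λ₁s Λ₂s, IsSaddle X T α β γ η ρ₁ ρ₂ Ws Zs Wts Λ₁s Λ₂s) :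
    Filter.Tendsto (fun k => frob (W k * X - Z k)) Filter.atTop (nhds 0)
    ∧ Filter.Tendsto (fun k => frob (Wt k - W k)) Filter.atTop (nhds 0) := by
  classical
  obtain ⟨Ws, Zs, Wts, Λ₁s, Λ₂s, hsad⟩ := hsaddle
  obtain ⟨hW, hZ, hWt, hL1, hL2⟩ := hadmm
  obtain ⟨hfe1, hfe2⟩ := saddle_feas hsad
  have hws : Ws * X = Zs := sub_eq_zero.mp hfe1
  have hwts : Ws = Wts := sub_eq_zero.mp hfe2
  -- subgradient inequalities for the iterates
  have hZsub : ∀ k z, minner (Λ₁ (k+1)) (z - Z (k+1)) ≤ g1obj T η z - g1obj T η (Z (k+1)) := by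
    intro k z
    have h := Zstep_subgrad hη (hZ k) z
    rwa [← hL1 k] at h
  have hWtsub : ∀ k w, minner (Λ₂ (k+1)) (w - Wt (k+1)) ≤ g2obj γ w - g2obj γ (Wt (k+1)) := by
    intro k w
    have h := Wtstep_subgrad hγ (hWt k) w
    rwa [← hL2 k] at h
  have hWsub : ∀ k w, fobj X α β (W (k+1)) - fobj X α β w
      ≤ minner (Λ₁ k + ρ₁ • (W (k+1) * X - Z k)) ((w - W (k+1)) * X)
        + minner (Λ₂ k + ρ₂ • (W (k+1) - Wt k)) (w - W (k+1)) :=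
    fun k w => Wstep_subgrad hα hβ (hW k) w
  -- monotonicity of subdifferentials
  have hmono1 : ∀ k, 0 ≤ minner (W (k+2) * X - Z (k+2)) (Z (k+2) - Z (k+1)) := by
    intro k
    have h1 := hZsub (k+1) (Z (k+1))
    have h2 := hZsub k (Z (k+2))
    have hdiff : minner (Λ₁ (k+2)) (Z (k+1) - Z (k+2))
        = - minner (Λ₁ (k+2)) (Z (k+2) - Z (k+1)) := by
      rw [minner_sub_right, minner_sub_right]; ring
    have hsum : 0 ≤ minner (Λ₁ (k+2) - Λ₁ (k+1)) (Z (k+2) - Z (k+1)) := by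
      rw [minner_sub_left]; linarith
    have hstep : Λ₁ (k+2) - Λ₁ (k+1) = ρ₁ • (W (k+2) * X - Z (k+2)) := by
      rw [hL1 (k+1)]; abel
    rw [hstep, minner_smul_left] at hsum
    by_contra hneg
    push_neg at hneg
    nlinarith [mul_pos hρ₁ (neg_pos.mpr hneg)]
  have hmono2 : ∀ k, 0 ≤ minner (W (k+2) - Wt (k+2)) (Wt (k+2) - Wt (k+1)) := by
    intro k
    have h1 := hWtsub (k+1) (Wt (k+1))
    have h2 := hWtsub k (Wt (k+2))
    have hdiff : minner (Λ₂ (k+2)) (Wt (k+1) - Wt (k+2))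
        = - minner (Λ₂ (k+2)) (Wt (k+2) - Wt (k+1)) := by
      rw [minner_sub_right, minner_sub_right]; ring
    have hsum : 0 ≤ minner (Λ₂ (k+2) - Λ₂ (k+1)) (Wt (k+2) - Wt (k+1)) := by
      rw [minner_sub_left]; linarith
    have hstep : Λ₂ (k+2) - Λ₂ (k+1) = ρ₂ • (W (k+2) - Wt (k+2)) := by
      rw [hL2 (k+1)]; abel
    rw [hstep, minner_smul_left] at hsum
    by_contra hneg
    push_neg at hneg
    nlinarith [mul_pos hρ₂ (neg_pos.mpr hneg)]
  -- Lyapunov function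
  have hdesc : ∀ k,
      ρ₁/2 * frobSq (W (k+2) * X - Z (k+2)) + ρ₂/2 * frobSq (W (k+2) - Wt (k+2))
      ≤ (1/(2*ρ₁) * frobSq (Λ₁ (k+1) - Λ₁s) + ρ₁/2 * frobSq (Z (k+1) - Zs)
          + 1/(2*ρ₂) * frobSq (Λ₂ (k+1) - Λ₂s) + ρ₂/2 * frobSq (Wt (k+1) - Wts))
        - (1/(2*ρ₁) * frobSq (Λ₁ (k+2) - Λ₁s) + ρ₁/2 * frobSq (Z (k+2) - Zs)
          + 1/(2*ρ₂) * frobSq (Λ₂ (k+2) - Λ₂s) + ρ₂/2 * frobSq (Wt (k+2) - Wts)) := by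
    intro k
    have hstar := saddle_linear hα hβ hγ hη hsad hfe1 hfe2 (W (k+2)) (Z (k+2)) (Wt (k+2))
    have hw := hWsub (k+1) Ws
    have hz := hZsub (k+1) Zs
    have hwt := hWtsub (k+1) Wts
    have hidx : ∀ j : ℕ, j + 1 + 1 = j + 2 := fun j => rfl
    simp only [hidx] at hw hz hwt
    -- rewrite hw to block form
    have hM1 : Λ₁ (k+1) + ρ₁ • (W (k+2) * X - Z (k+1))
        = Λ₁ (k+1) + ρ₁ • (W (k+2) * X - Z (k+2)) + ρ₁ • (Z (k+2) - Z (k+1)) := by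
      rw [show W (k+2) * X - Z (k+1)
        = (W (k+2) * X - Z (k+2)) + (Z (k+2) - Z (k+1)) from by abel, smul_add]
      abel
    have hM2 : Λ₂ (k+1) + ρ₂ • (W (k+2) - Wt (k+1))
        = Λ₂ (k+1) + ρ₂ • (W (k+2) - Wt (k+2)) + ρ₂ • (Wt (k+2) - Wt (k+1)) := by
      rw [show W (k+2) - Wt (k+1)
        = (W (k+2) - Wt (k+2)) + (Wt (k+2) - Wt (k+1)) from by abel, smul_add]
      abel
    have hArg1 : (Ws - W (k+2)) * X = (Zs - Z (k+2)) - (W (k+2) * X - Z (k+2)) := by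
      rw [Matrix.sub_mul, hws]; abel
    have hArg2 : Ws - W (k+2) = (Wts - Wt (k+2)) - (W (k+2) - Wt (k+2)) := by
      rw [← hwts]; abel
    rw [hM1, hM2, hArg1, hArg2] at hw
    have hL1' : Λ₁ (k+2) = Λ₁ (k+1) + ρ₁ • (W (k+2) * X - Z (k+2)) := hL1 (k+1)
    have hL2' : Λ₂ (k+2) = Λ₂ (k+1) + ρ₂ • (W (k+2) - Wt (k+2)) := hL2 (k+1)
    rw [hL1'] at hz
    rw [hL2'] at hwt
    have hb1 := block_identity (Λ₁ (k+1)) Λ₁s (W (k+2) * X - Z (k+2)) (Z (k+2) - Z (k+1))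
      (Zs - Z (k+2)) hρ₁.ne'
    have hb2 := block_identity (Λ₂ (k+1)) Λ₂s (W (k+2) - Wt (k+2)) (Wt (k+2) - Wt (k+1))
      (Wts - Wt (k+2)) hρ₂.ne'
    -- atom conversions
    have e1 : frobSq (Λ₁ (k+2) - Λ₁s)
        = frobSq (Λ₁ (k+1) + ρ₁ • (W (k+2) * X - Z (k+2)) - Λ₁s) := by rw [hL1']
    have e2 : frobSq (Z (k+2) - Zs) = frobSq (Zs - Z (k+2)) := frobSq_sub_comm _ _
    have e3 : frobSq ((Zs - Z (k+2)) + (Z (k+2) - Z (k+1))) = frobSq (Z (k+1) - Zs) := by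
      rw [show (Zs - Z (k+2)) + (Z (k+2) - Z (k+1)) = Zs - Z (k+1) from by abel]
      exact frobSq_sub_comm _ _
    have e4 : frobSq (Λ₂ (k+2) - Λ₂s)
        = frobSq (Λ₂ (k+1) + ρ₂ • (W (k+2) - Wt (k+2)) - Λ₂s) := by rw [hL2']
    have e5 : frobSq (Wt (k+2) - Wts) = frobSq (Wts - Wt (k+2)) := frobSq_sub_comm _ _
    have e6 : frobSq ((Wts - Wt (k+2)) + (Wt (k+2) - Wt (k+1))) = frobSq (Wt (k+1) - Wts) := by
      rw [show (Wts - Wt (k+2)) + (Wt (k+2) - Wt (k+1)) = Wts - Wt (k+1) from by abel]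
      exact frobSq_sub_comm _ _
    have hm1 := mul_nonneg hρ₁.le (hmono1 k)
    have hm2 := mul_nonneg hρ₂.le (hmono2 k)
    have hq1 := mul_nonneg hρ₁.le (frobSq_nonneg (Z (k+2) - Z (k+1)))
    have hq2 := mul_nonneg hρ₂.le (frobSq_nonneg (Wt (k+2) - Wt (k+1)))
    have hsum0 : 0 ≤ (minner (Λ₁ (k + 1) + ρ₁ • (W (k + 2) * X - Z (k + 2)) + ρ₁ • (Z (k + 2) - Z (k + 1)))
          (Zs - Z (k + 2) - (W (k + 2) * X - Z (k + 2)))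
        - minner (Λ₁ (k + 1) + ρ₁ • (W (k + 2) * X - Z (k + 2))) (Zs - Z (k + 2))
        + minner Λ₁s (W (k + 2) * X - Z (k + 2)))
        + (minner (Λ₂ (k + 1) + ρ₂ • (W (k + 2) - Wt (k + 2)) + ρ₂ • (Wt (k + 2) - Wt (k + 1)))
          (Wts - Wt (k + 2) - (W (k + 2) - Wt (k + 2)))
        - minner (Λ₂ (k + 1) + ρ₂ • (W (k + 2) - Wt (k + 2))) (Wts - Wt (k + 2))
        + minner Λ₂s (W (k + 2) - Wt (k + 2))) := by
      linarith [hstar, hw, hz, hwt]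
    rw [hb1, hb2] at hsum0
    rw [e1, e2, e4, e5, ← e3, ← e6]
    linarith [hsum0, hm1, hm2, hq1, hq2]
  -- telescoping and limits
  set Vf : ℕ → ℝ := fun j => 1/(2*ρ₁) * frobSq (Λ₁ j - Λ₁s) + ρ₁/2 * frobSq (Z j - Zs)
      + 1/(2*ρ₂) * frobSq (Λ₂ j - Λ₂s) + ρ₂/2 * frobSq (Wt j - Wts) with hVf
  have hVnonneg : ∀ j, 0 ≤ Vf j := by
    intro j
    rw [hVf]
    have h1 := frobSq_nonneg (Λ₁ j - Λ₁s)
    have h2 := frobSq_nonneg (Z j - Zs)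
    have h3 := frobSq_nonneg (Λ₂ j - Λ₂s)
    have h4 := frobSq_nonneg (Wt j - Wts)
    have c1 : (0:ℝ) ≤ 1/(2*ρ₁) := by positivity
    have c2 : (0:ℝ) ≤ ρ₁/2 := by positivity
    have c3 : (0:ℝ) ≤ 1/(2*ρ₂) := by positivity
    have c4 : (0:ℝ) ≤ ρ₂/2 := by positivity
    dsimp only
    nlinarith [mul_nonneg c1 h1, mul_nonneg c2 h2, mul_nonneg c3 h3, mul_nonneg c4 h4]
  set u : ℕ → ℝ := fun k =>
      ρ₁/2 * frobSq (W (k+2) * X - Z (k+2)) + ρ₂/2 * frobSq (W (k+2) - Wt (k+2)) with hu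
  have hunonneg : ∀ k, 0 ≤ u k := by
    intro k
    rw [hu]
    dsimp only
    have h1 := mul_nonneg (by positivity : (0:ℝ) ≤ ρ₁/2) (frobSq_nonneg (W (k+2) * X - Z (k+2)))
    have h2 := mul_nonneg (by positivity : (0:ℝ) ≤ ρ₂/2) (frobSq_nonneg (W (k+2) - Wt (k+2)))
    linarith
  have hsumle : ∀ N : ℕ, ∑ k ∈ Finset.range N, u k ≤ Vf 1 := by
    intro N
    have htel : ∑ k ∈ Finset.range N, (Vf (k+1) - Vf (k+2)) = Vf 1 - Vf (N+1) := by
      simpa using Finset.sum_range_sub' (fun i => Vf (i+1)) N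
    have hle : ∑ k ∈ Finset.range N, u k ≤ ∑ k ∈ Finset.range N, (Vf (k+1) - Vf (k+2)) := by
      apply Finset.sum_le_sum
      intro k _
      exact hdesc k
    calc ∑ k ∈ Finset.range N, u k ≤ Vf 1 - Vf (N+1) := by rw [← htel]; exact hle
      _ ≤ Vf 1 := by linarith [hVnonneg (N+1)]
  have hsummable : Summable u := summable_of_sum_range_le hunonneg hsumle
  have hu0 : Filter.Tendsto u Filter.atTop (nhds 0) := hsummable.tendsto_atTop_zero
  -- extract individual limits
  have hfr1 : Filter.Tendsto (fun k => frobSq (W (k+2) * X - Z (k+2))) Filter.atTop (nhds 0) := by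
    apply squeeze_zero (fun k => frobSq_nonneg _) (g := fun k => (2/ρ₁) * u k)
    · intro k
      rw [hu]
      dsimp only
      have hexp : (2/ρ₁) * (ρ₁/2 * frobSq (W (k+2) * X - Z (k+2))
          + ρ₂/2 * frobSq (W (k+2) - Wt (k+2)))
          = frobSq (W (k+2) * X - Z (k+2)) + (ρ₂/ρ₁) * frobSq (W (k+2) - Wt (k+2)) := by
        field_simp
      rw [hexp]
      have := mul_nonneg (by positivity : (0:ℝ) ≤ ρ₂/ρ₁) (frobSq_nonneg (W (k+2) - Wt (k+2)))
      linarith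
    · have := hu0.const_mul (2/ρ₁)
      simpa using this
  have hfr2 : Filter.Tendsto (fun k => frobSq (W (k+2) - Wt (k+2))) Filter.atTop (nhds 0) := by
    apply squeeze_zero (fun k => frobSq_nonneg _) (g := fun k => (2/ρ₂) * u k)
    · intro k
      rw [hu]
      dsimp only
      have hexp : (2/ρ₂) * (ρ₁/2 * frobSq (W (k+2) * X - Z (k+2))
          + ρ₂/2 * frobSq (W (k+2) - Wt (k+2)))
          = (ρ₁/ρ₂) * frobSq (W (k+2) * X - Z (k+2)) + frobSq (W (k+2) - Wt (k+2)) := by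
        field_simp
      rw [hexp]
      have := mul_nonneg (by positivity : (0:ℝ) ≤ ρ₁/ρ₂) (frobSq_nonneg (W (k+2) * X - Z (k+2)))
      linarith
    · have := hu0.const_mul (2/ρ₂)
      simpa using this
  have hsh1 : Filter.Tendsto (fun k => frobSq (W k * X - Z k)) Filter.atTop (nhds 0) :=
    (Filter.tendsto_add_atTop_iff_nat 2).mp hfr1
  have hsh2 : Filter.Tendsto (fun k => frobSq (W k - Wt k)) Filter.atTop (nhds 0) :=
    (Filter.tendsto_add_atTop_iff_nat 2).mp hfr2
  have hsqrt : Filter.Tendsto Real.sqrt (nhds 0) (nhds 0) :=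
    Real.continuous_sqrt.tendsto' 0 0 Real.sqrt_zero
  constructor
  · have := hsqrt.comp hsh1
    simpa [Function.comp_def, frob] using this
  · have h2' : Filter.Tendsto (fun k => frobSq (Wt k - W k)) Filter.atTop (nhds 0) := by
      have : (fun k => frobSq (Wt k - W k)) = fun k => frobSq (W k - Wt k) := by
        funext k; exact frobSq_sub_comm _ _
      rw [this]; exact hsh2
    have := hsqrt.comp h2'
    simpa [Function.comp_def, frob] using this
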